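/- Let n ≥ 2, 1 ≤ α ≤ n−1, and ψ > 0, δ > 0 real numbers. Suppose λ, μ ∈ ℝ^n have all coordinates positive and satisfy, for every index 1 ≤ i ≤ n, n·σ_{n−1}(λ\^i) ≥ (1+δ)^{α}·(n−α)·ψ·σ_{n−α−1}(λ\^i) and n·σ_{n−1}(μ\^i) ≥ (n−α)·ψ·σ_{n−α−1}(μ\^i). Then for every t ∈ [0,1] and every index i, the vector λ_t = (1−t)λ + tμ satisfies n·σ_{n−1}(λ_t\^i) − (n−α)·ψ·σ_{n−α−1}(λ_t\^i) ≥ n·(1 − (1+δ−δt)^{−α})·σ_{n−1}(λ_t\^i). (This is the pointwise inequality (3.12) of the paper used for the complex Monge–Ampère type equation on Hermitian manifolds.) -/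

import Mathlib

/-- The `k`-th elementary symmetric polynomial `σ_k` of `x ∈ ℝⁿ`. -/
noncomputable def esymm {n : ℕ} (k : ℕ) (x : Fin n → ℝ) : ℝ :=
  ∑ s ∈ Finset.univ.powersetCard k, ∏ i ∈ s, x i

/-- The Gårding cone `Γ_k = {x : σ_j(x) > 0 for all 1 ≤ j ≤ k}`. -/
def GammaCone {n : ℕ} (k : ℕ) (x : Fin n → ℝ) : Prop :=
  ∀ j : ℕ, 1 ≤ j → j ≤ k → 0 < esymm j x

/-- The vector `x\^i ∈ ℝ^{n-1}` obtained from `x ∈ ℝⁿ` by deleting its `i`-th coordinate. -/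
def deleteAt {n : ℕ} (x : Fin n → ℝ) (i : Fin n) (j : Fin (n - 1)) : ℝ :=
  if (j : ℕ) < (i : ℕ) then x ⟨j, Nat.lt_of_lt_of_le j.isLt (Nat.sub_le n 1)⟩
  else x ⟨(j : ℕ) + 1, Nat.add_lt_of_lt_sub j.isLt⟩

lemma esymm_self (m : ℕ) (x : Fin m → ℝ) : esymm m x = ∏ i, x i := by
  have hps : (Finset.univ : Finset (Fin m)).powersetCard m = {Finset.univ} := by
    simpa using Finset.powersetCard_self (Finset.univ : Finset (Fin m))
  rw [esymm, hps, Finset.sum_singleton]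

lemma esymm_smul (m k : ℕ) (c : ℝ) (x : Fin m → ℝ) :
    esymm k (fun i => c * x i) = c ^ k * esymm k x := by
  unfold esymm
  rw [Finset.mul_sum]
  refine Finset.sum_congr rfl fun s hs => ?_
  rw [Finset.prod_mul_distrib, Finset.prod_const, (Finset.mem_powersetCard.mp hs).2]

lemma esymm_compl (m α : ℕ) (hα : α ≤ m) (x : Fin m → ℝ) (hx : ∀ i, 0 < x i) :
    esymm (m - α) x =
      (∏ i, x i) * ∑ T ∈ Finset.univ.powersetCard α, ∏ i ∈ T, (x i)⁻¹ := by
  unfold esymm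
  rw [Finset.mul_sum]
  refine Finset.sum_nbij' (i := fun S => Sᶜ) (j := fun T => Tᶜ) ?_ ?_ ?_ ?_ ?_
  · intro S hS
    obtain ⟨-, hc⟩ := Finset.mem_powersetCard.mp hS
    refine Finset.mem_powersetCard.mpr ⟨Finset.subset_univ _, ?_⟩
    rw [Finset.card_compl, hc]
    simp
    omega
  · intro T hT
    obtain ⟨-, hc⟩ := Finset.mem_powersetCard.mp hT
    refine Finset.mem_powersetCard.mpr ⟨Finset.subset_univ _, ?_⟩
    rw [Finset.card_compl, hc]
    simp
  · intro S _; simp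
  · intro T _; simp
  · intro S _
    rw [Finset.prod_inv_distrib]
    have h := Finset.prod_mul_prod_compl Sᶜ x
    rw [compl_compl] at h
    have hpos : 0 < ∏ i ∈ Sᶜ, x i := Finset.prod_pos fun i _ => hx i
    field_simp
    linarith [h]

lemma prod_inv_convex (m : ℕ) (T : Finset (Fin m)) (a b : ℝ) (ha : 0 ≤ a) (hb : 0 ≤ b)
    (hab : a + b = 1) (u v : Fin m → ℝ) (hu : ∀ i, 0 < u i) (hv : ∀ i, 0 < v i) :
    ∏ i ∈ T, (a * u i + b * v i)⁻¹ ≤ a * ∏ i ∈ T, (u i)⁻¹ + b * ∏ i ∈ T, (v i)⁻¹ := by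
  simp only [Finset.prod_inv_distrib]
  have hw : ∀ i, 0 < a * u i + b * v i := by
    intro i
    rcases (by by_contra h; push_neg at h; nlinarith : 0 < a ∨ 0 < b) with h | h
    · exact add_pos_of_pos_of_nonneg (mul_pos h (hu i)) (mul_nonneg hb (hv i).le)
    · exact add_pos_of_nonneg_of_pos (mul_nonneg ha (hu i).le) (mul_pos h (hv i))
  have hPu : 0 < ∏ i ∈ T, u i := Finset.prod_pos fun i _ => hu i
  have hPv : 0 < ∏ i ∈ T, v i := Finset.prod_pos fun i _ => hv i
  have h2 : (∏ i ∈ T, u i) ^ a * (∏ i ∈ T, v i) ^ b ≤ ∏ i ∈ T, (a * u i + b * v i) := by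
    rw [← Real.finset_prod_rpow T u (fun i _ => (hu i).le) a,
        ← Real.finset_prod_rpow T v (fun i _ => (hv i).le) b, ← Finset.prod_mul_distrib]
    exact Finset.prod_le_prod
      (fun i _ => mul_nonneg (Real.rpow_nonneg (hu i).le a) (Real.rpow_nonneg (hv i).le b))
      (fun i _ => Real.geom_mean_le_arith_mean2_weighted ha hb (hu i).le (hv i).le hab)
  have hgm : 0 < (∏ i ∈ T, u i) ^ a * (∏ i ∈ T, v i) ^ b := by positivity
  have h3 : (∏ i ∈ T, (a * u i + b * v i))⁻¹ ≤
      ((∏ i ∈ T, u i) ^ a * (∏ i ∈ T, v i) ^ b)⁻¹ :=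
    inv_anti₀ hgm h2
  have h4 : ((∏ i ∈ T, u i) ^ a * (∏ i ∈ T, v i) ^ b)⁻¹ =
      ((∏ i ∈ T, u i)⁻¹) ^ a * ((∏ i ∈ T, v i)⁻¹) ^ b := by
    rw [mul_inv, Real.inv_rpow hPu.le, Real.inv_rpow hPv.le]
  have h5 : ((∏ i ∈ T, u i)⁻¹) ^ a * ((∏ i ∈ T, v i)⁻¹) ^ b ≤
      a * (∏ i ∈ T, u i)⁻¹ + b * (∏ i ∈ T, v i)⁻¹ :=
    Real.geom_mean_le_arith_mean2_weighted ha hb (by positivity) (by positivity) hab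
  calc (∏ i ∈ T, (a * u i + b * v i))⁻¹ ≤ _ := h3
    _ = _ := h4
    _ ≤ _ := h5

/-- the key convexity statement: the set of positive vectors with
`c · σ_{m-α} ≤ A · σ_m` is convex. -/
lemma key_convex (m α : ℕ) (hα : α ≤ m) (A c : ℝ) (hc : 0 ≤ c)
    (a b : ℝ) (ha : 0 ≤ a) (hb : 0 ≤ b) (hab : a + b = 1)
    (u v : Fin m → ℝ) (hu : ∀ i, 0 < u i) (hv : ∀ i, 0 < v i)
    (hu' : c * esymm (m - α) u ≤ A * esymm m u)
    (hv' : c * esymm (m - α) v ≤ A * esymm m v) :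
    c * esymm (m - α) (fun i => a * u i + b * v i) ≤
      A * esymm m (fun i => a * u i + b * v i) := by
  have hw : ∀ i, 0 < a * u i + b * v i := by
    intro i
    rcases (by by_contra h; push_neg at h; nlinarith : 0 < a ∨ 0 < b) with h | h
    · exact add_pos_of_pos_of_nonneg (mul_pos h (hu i)) (mul_nonneg hb (hv i).le)
    · exact add_pos_of_nonneg_of_pos (mul_nonneg ha (hu i).le) (mul_pos h (hv i))
  have hPu : 0 < ∏ i, u i := Finset.prod_pos fun i _ => hu i
  have hPv : 0 < ∏ i, v i := Finset.prod_pos fun i _ => hv i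
  have hPw : 0 < ∏ i, (a * u i + b * v i) := Finset.prod_pos fun i _ => hw i
  set Gu := ∑ T ∈ Finset.univ.powersetCard α, ∏ i ∈ T, (u i)⁻¹ with hGu
  set Gv := ∑ T ∈ Finset.univ.powersetCard α, ∏ i ∈ T, (v i)⁻¹ with hGv
  set Gw := ∑ T ∈ Finset.univ.powersetCard α, ∏ i ∈ T, (a * u i + b * v i)⁻¹ with hGw
  have hu2 : c * Gu ≤ A := by
    rw [esymm_compl m α hα u hu, esymm_self] at hu'
    nlinarith [hu', hPu]
  have hv2 : c * Gv ≤ A := by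
    rw [esymm_compl m α hα v hv, esymm_self] at hv'
    nlinarith [hv', hPv]
  have hconv : Gw ≤ a * Gu + b * Gv := by
    rw [hGu, hGv, hGw, Finset.mul_sum, Finset.mul_sum, ← Finset.sum_add_distrib]
    exact Finset.sum_le_sum fun T _ => prod_inv_convex m T a b ha hb hab u v hu hv
  have hw2 : c * Gw ≤ A := by
    have h1 : c * Gw ≤ c * (a * Gu + b * Gv) := mul_le_mul_of_nonneg_left hconv hc
    have h2 : c * (a * Gu + b * Gv) = a * (c * Gu) + b * (c * Gv) := by ring
    have h3 : a * (c * Gu) ≤ a * A := mul_le_mul_of_nonneg_left hu2 ha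
    have h4 : b * (c * Gv) ≤ b * A := mul_le_mul_of_nonneg_left hv2 hb
    have h5 : a * A + b * A = A := by rw [← add_mul, hab, one_mul]
    linarith
  rw [esymm_compl m α hα _ hw, esymm_self]
  nlinarith [hw2, hPw]

lemma main_aux (m α : ℕ) (hα : α ≤ m) (A c d s : ℝ) (hc : 0 ≤ c) (hd0 : 0 < d) (hs0 : 0 < s)
    (a b : ℝ) (ha : 0 ≤ a) (hb : 0 ≤ b) (hab : a + b = 1)
    (X Y Z : Fin m → ℝ) (hX : ∀ k, 0 < X k) (hY : ∀ k, 0 < Y k)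
    (hZ : ∀ k, Z k = s * (a * (d⁻¹ * X k) + b * Y k))
    (hXc : A * esymm m X ≥ d ^ α * (c * esymm (m - α) X))
    (hYc : A * esymm m Y ≥ c * esymm (m - α) Y) :
    A * esymm m Z - c * esymm (m - α) Z ≥ A * (1 - (s ^ α)⁻¹) * esymm m Z := by
  have hu2 : c * esymm (m - α) (fun k => d⁻¹ * X k) ≤ A * esymm m (fun k => d⁻¹ * X k) := by
    rw [esymm_smul, esymm_smul]
    have hdm : d ^ α * d⁻¹ ^ m = d⁻¹ ^ (m - α) := by
      have h : m = α + (m - α) := by omega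
      calc d ^ α * d⁻¹ ^ m = d ^ α * d⁻¹ ^ (α + (m - α)) := by rw [← h]
        _ = d⁻¹ ^ (m - α) := by
            rw [pow_add, ← mul_assoc, ← mul_pow, mul_inv_cancel₀ hd0.ne', one_pow, one_mul]
    have h1 := mul_le_mul_of_nonneg_left hXc.le (pow_nonneg (inv_nonneg.mpr hd0.le) m)
    calc c * (d⁻¹ ^ (m - α) * esymm (m - α) X)
        = d⁻¹ ^ m * (d ^ α * (c * esymm (m - α) X)) := by rw [← hdm]; ring
      _ ≤ d⁻¹ ^ m * (A * esymm m X) := h1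
      _ = A * (d⁻¹ ^ m * esymm m X) := by ring
  have hupos : ∀ k, 0 < d⁻¹ * X k := fun k => mul_pos (inv_pos.mpr hd0) (hX k)
  have hkey := key_convex m α hα A c hc a b ha hb hab (fun k => d⁻¹ * X k) Y hupos hY hu2 hYc.le
  have hZfun : Z = fun k => s * (a * (d⁻¹ * X k) + b * Y k) := funext hZ
  have hEmZ : esymm m Z = s ^ m * esymm m (fun k => a * (d⁻¹ * X k) + b * Y k) := by
    rw [hZfun]; exact esymm_smul m m s _
  have hEaZ : esymm (m - α) Z =
      s ^ (m - α) * esymm (m - α) (fun k => a * (d⁻¹ * X k) + b * Y k) := by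
    rw [hZfun]; exact esymm_smul m (m - α) s _
  have hspow : (s ^ α)⁻¹ * s ^ m = s ^ (m - α) := by
    have h : m = α + (m - α) := by omega
    calc (s ^ α)⁻¹ * s ^ m = (s ^ α)⁻¹ * s ^ (α + (m - α)) := by rw [← h]
      _ = s ^ (m - α) := by
          rw [pow_add, ← mul_assoc, inv_mul_cancel₀ (pow_ne_zero _ hs0.ne'), one_mul]
  set Ew := esymm m (fun k => a * (d⁻¹ * X k) + b * Y k) with hEw
  set Fw := esymm (m - α) (fun k => a * (d⁻¹ * X k) + b * Y k) with hFw
  rw [hEmZ, hEaZ]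
  have hmono : c * (s ^ (m - α) * Fw) ≤ A * (s ^ (m - α) * Ew) := by
    nlinarith [hkey, pow_pos hs0 (m - α)]
  have hring : A * (1 - (s ^ α)⁻¹) * (s ^ m * Ew) =
      A * (s ^ m * Ew) - A * (s ^ (m - α) * Ew) := by
    rw [← hspow]; ring
  rw [ge_iff_le, hring]
  linarith

/-- the pointwise inequality (3.12) of the paper,
used for the complex Monge–Ampère type equation on Hermitian manifolds. -/
theorem monge_ampere_type_pointwise (n α : ℕ) (hn : 2 ≤ n) (hα1 : 1 ≤ α) (hαn : α ≤ n - 1)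
    (ψ δ : ℝ) (hψ : 0 < ψ) (hδ : 0 < δ)
    (lam mu : Fin n → ℝ) (hlam : ∀ i, 0 < lam i) (hmu : ∀ i, 0 < mu i)
    (hlamc : ∀ i : Fin n,
      (n : ℝ) * esymm (n - 1) (deleteAt lam i) ≥
        (1 + δ) ^ α * (((n : ℝ) - (α : ℝ)) * ψ * esymm (n - α - 1) (deleteAt lam i)))
    (hmuc : ∀ i : Fin n,
      (n : ℝ) * esymm (n - 1) (deleteAt mu i) ≥
        ((n : ℝ) - (α : ℝ)) * ψ * esymm (n - α - 1) (deleteAt mu i))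
    (t : ℝ) (ht0 : 0 ≤ t) (ht1 : t ≤ 1) (i : Fin n) :
    (n : ℝ) * esymm (n - 1) (deleteAt (fun j => (1 - t) * lam j + t * mu j) i) -
        ((n : ℝ) - (α : ℝ)) * ψ *
          esymm (n - α - 1) (deleteAt (fun j => (1 - t) * lam j + t * mu j) i) ≥
      (n : ℝ) * (1 - ((1 + δ - δ * t) ^ α)⁻¹) *
        esymm (n - 1) (deleteAt (fun j => (1 - t) * lam j + t * mu j) i) := by
  have hidx : n - α - 1 = n - 1 - α := by omega
  rw [hidx]
  have hd0 : (0 : ℝ) < 1 + δ := by linarith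
  have hs0 : (0 : ℝ) < 1 + δ - δ * t := by nlinarith
  have hc : 0 ≤ ((n : ℝ) - (α : ℝ)) * ψ := by
    have h1 : (α : ℝ) ≤ ((n - 1 : ℕ) : ℝ) := Nat.cast_le.mpr hαn
    rw [Nat.cast_sub (by omega), Nat.cast_one] at h1
    nlinarith
  have ha : (0 : ℝ) ≤ (1 - t) * (1 + δ) / (1 + δ - δ * t) := div_nonneg (mul_nonneg (by linarith) hd0.le) hs0.le
  have hb : (0 : ℝ) ≤ t / (1 + δ - δ * t) := div_nonneg ht0 hs0.le
  have hab : (1 - t) * (1 + δ) / (1 + δ - δ * t) + t / (1 + δ - δ * t) = 1 := by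
    rw [← add_div, div_eq_one_iff_eq hs0.ne']; ring
  have hXpos : ∀ k, 0 < deleteAt lam i k := by
    intro k; unfold deleteAt; split <;> exact hlam _
  have hYpos : ∀ k, 0 < deleteAt mu i k := by
    intro k; unfold deleteAt; split <;> exact hmu _
  have hZ : ∀ k, deleteAt (fun j => (1 - t) * lam j + t * mu j) i k =
      (1 + δ - δ * t) * ((1 - t) * (1 + δ) / (1 + δ - δ * t) * ((1 + δ)⁻¹ * deleteAt lam i k) +
        t / (1 + δ - δ * t) * deleteAt mu i k) := by
    intro k
    have h1 : deleteAt (fun j => (1 - t) * lam j + t * mu j) i k =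
        (1 - t) * deleteAt lam i k + t * deleteAt mu i k := by
      unfold deleteAt; split <;> rfl
    rw [h1]
    have e1 : (1 + δ - δ * t) * (1 + δ - δ * t)⁻¹ = 1 := mul_inv_cancel₀ hs0.ne'
    have e2 : (1 + δ) * (1 + δ)⁻¹ = 1 := mul_inv_cancel₀ hd0.ne'
    linear_combination (-(1 - t) * deleteAt lam i k * ((1 + δ - δ * t) * (1 + δ - δ * t)⁻¹)) * e2 +
      (-(1 - t) * deleteAt lam i k - t * deleteAt mu i k) * e1
  have hres := main_aux (n - 1) α hαn (n : ℝ) (((n : ℝ) - (α : ℝ)) * ψ) (1 + δ) (1 + δ - δ * t)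
    hc hd0 hs0 _ _ ha hb hab
    (deleteAt lam i) (deleteAt mu i) (deleteAt (fun j => (1 - t) * lam j + t * mu j) i)
    hXpos hYpos hZ (by rw [← hidx]; exact hlamc i) (by rw [← hidx]; exact hmuc i)
  exact hres
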